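/- Let M be a module over ℋ with C_I acting as 0, C_{LI} acting as c ≠ 0, and let v ∈ M satisfy L(n)v = I(n)v = 0 for all n > 0, L(0)v = h·v, I(0)v = 0. Then the vector w = (L(−1) + (h/c)·I(−1))v satisfies L(n)w = I(n)w = 0 for all n > 0, i.e., w is a singular vector of weight h+1. -/

import Mathlib

/-- Let M be an ℋ-module with C_I acting as 0 and C_{LI} acting as c ≠ 0, and let v be a
highest weight vector with L(0)v = h·v, I(0)v = 0. Then w = (L(−1) + (h/c)I(−1))v is a
singular vector: L(n)w = I(n)w = 0 for all n > 0. -/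
theorem singular_vector_p_one_minus
    {M : Type*} [AddCommGroup M] [Module ℂ M]
    (L I : ℤ → Module.End ℂ M) (CL : Module.End ℂ M) (c h : ℂ) (hc : c ≠ 0)
    (hLL : ∀ n m : ℤ, ⁅L n, L m⁆ =
      ((n - m : ℤ) : ℂ) • L (n + m) +
        (if n = -m then (((n : ℂ) ^ 3 - (n : ℂ)) / 12) • CL else 0))
    (hLI : ∀ n m : ℤ, ⁅L n, I m⁆ =
      (-(m : ℂ)) • I (n + m) +
        (if n = -m then (-(((n : ℂ) ^ 2 + (n : ℂ)) * c)) • (1 : Module.End ℂ M) else 0))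
    (hII : ∀ n m : ℤ, ⁅I n, I m⁆ = 0)
    (v : M)
    (hv : ∀ n : ℤ, 0 < n → L n v = 0 ∧ I n v = 0)
    (hL0 : L 0 v = h • v) (hI0 : I 0 v = 0) :
    ∀ n : ℤ, 0 < n →
      L n (L (-1) v + (h / c) • I (-1) v) = 0 ∧ I n (L (-1) v + (h / c) • I (-1) v) = 0 := by
  have key : ∀ (f g : Module.End ℂ M) (x : M), f (g x) = ⁅f, g⁆ x + g (f x) := by
    intro f g x
    simp [Ring.lie_def, LinearMap.sub_apply, Module.End.mul_apply]
  intro n hn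
  have hLn := (hv n hn).1
  have hIn := (hv n hn).2
  have hInL : I n (L (-1) v) = ((n : ℂ)) • I (n - 1) v := by
    rw [key, show ⁅I n, L (-1)⁆ = -⁅L (-1), I n⁆ by simp only [Ring.lie_def]; abel, hLI]
    have : (-1 : ℤ) = -n ↔ n = 1 := by omega
    rcases eq_or_ne n 1 with h1 | h1
    · subst h1
      simp only [hIn, map_zero, add_zero]
      norm_num
    · have : ¬ ((-1 : ℤ) = -n) := by omega
      simp [this, hIn]
      rw [show (-1 : ℤ) + n = n - 1 by ring]
  have hInI : I n (I (-1) v) = 0 := by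
    rw [key, hII, hIn]; simp
  have hI' : I n (L (-1) v + (h / c) • I (-1) v) = 0 := by
    rcases eq_or_ne n 1 with h1 | h1
    · subst h1; simp [map_add, hInL, hInI, hI0]
    · have hn1 : 0 < n - 1 := by omega
      simp [map_add, hInL, hInI, (hv (n-1) hn1).2]
  refine ⟨?_, hI'⟩
  rcases eq_or_ne n 1 with h1 | h1
  · subst h1
    have e1 : L 1 (L (-1) v) = (2 : ℂ) • (h • v) := by
      rw [key, hLL, hLn]
      norm_num [hL0]
    have e2 : L 1 (I (-1) v) = (-(2 * c)) • v := by
      rw [key, hLI, (hv 1 one_pos).1]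
      norm_num [hI0]
    rw [map_add, map_smul, e1, e2, smul_smul, smul_smul]
    have : (2 : ℂ) * h + h / c * -(2 * c) = 0 := by
      field_simp
      ring
    rw [← add_smul, this, zero_smul]
  · have hn1 : 0 < n - 1 := by omega
    have hne : ¬ (n = -(-1 : ℤ)) := by omega
    have e1 : L n (L (-1) v) = 0 := by
      rw [key, hLL, hLn]
      simp [h1, show n + -1 = n - 1 by ring, (hv (n-1) hn1).1]
    have e2 : L n (I (-1) v) = 0 := by
      rw [key, hLI]
      simp [h1, hLn, show n + -1 = n - 1 by ring, (hv (n-1) hn1).2]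
    simp [map_add, e1, e2]
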